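/- For a density matrix ρ and Hermitian H, I_{ρ,α}(H) ≥ 0 for all α ∈ [0,1], i.e., Tr[ρ^α H ρ^{1−α} H] ≤ Tr[ρ H²]. -/
import Mathlib
open Matrix ComplexOrder

theorem aux_trace {n : Type*} [Fintype n] [DecidableEq n]
    (U : Matrix n n ℂ) (hU1 : star U * U = 1) (hU2 : U * star U = 1)
    (a b : n → ℂ) (H : Matrix n n ℂ) :
    (U * diagonal a * star U * H * (U * diagonal b * star U) * H).trace
      = ∑ i, ∑ j, a i * b j * ((star U * H * U) i j * (star U * H * U) j i) := by
  have h1 : U * diagonal a * star U * H * (U * diagonal b * star U) * H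
      = U * (diagonal a * (star U * H * U) * diagonal b * (star U * H * U)) * star U := by
    simp only [← Matrix.mul_assoc]
    rw [Matrix.mul_assoc _ U (star U), hU2, Matrix.mul_one]
  rw [h1, Matrix.trace_mul_cycle, ← Matrix.mul_assoc, hU1, Matrix.one_mul]
  set M := star U * H * U with hM
  have h2 : diagonal a * M * diagonal b = Matrix.of fun i j => a i * M i j * b j := by
    ext i j
    simp [Matrix.mul_diagonal, Matrix.diagonal_mul]
  rw [h2]
  simp only [Matrix.trace, Matrix.diag, Matrix.mul_apply, Matrix.of_apply]
  exact Finset.sum_congr rfl fun i _ => Finset.sum_congr rfl fun j _ => by ring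


/-- The real power of a positive semidefinite matrix, defined via the
continuous functional calculus (spectral decomposition). -/
noncomputable def mpow {n : Type*} [Fintype n] [DecidableEq n]
    (ρ : Matrix n n ℂ) (hρ : ρ.PosSemidef) (α : ℝ) : Matrix n n ℂ :=
  hρ.1.cfc (fun x : ℝ => x ^ α)

theorem stmt14 {n : Type*} [Fintype n] [DecidableEq n]
    (ρ : Matrix n n ℂ) (hρ : ρ.PosSemidef) (htr : ρ.trace = 1)
    (H : Matrix n n ℂ) (hH : H.IsHermitian)
    (α : ℝ) (hα : α ∈ Set.Icc (0:ℝ) 1) :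
    (mpow ρ hρ α * H * mpow ρ hρ (1-α) * H).trace ≤ (ρ * H ^ 2).trace := by
  obtain ⟨hα0, hα1⟩ := hα
  set U : Matrix n n ℂ := (hρ.1.eigenvectorUnitary : Matrix n n ℂ) with hU
  have hU2 : U * star U = 1 := mem_unitaryGroup_iff.mp hρ.1.eigenvectorUnitary.2
  have hU1 : star U * U = 1 := mem_unitaryGroup_iff'.mp hρ.1.eigenvectorUnitary.2
  set lam := hρ.1.eigenvalues with hlam
  have hlam0 : ∀ i, 0 ≤ lam i := hρ.eigenvalues_nonneg
  set M := star U * H * U with hM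
  have hM' : M.IsHermitian := by
    rw [hM, Matrix.star_eq_conjTranspose]
    exact isHermitian_conjTranspose_mul_mul U hH
  have hMji : ∀ i j, M j i = (starRingEnd ℂ) (M i j) :=
    fun i j => by
      conv_lhs => rw [← hM'.eq]
      exact Matrix.conjTranspose_apply M i j
  have hmpow : ∀ β : ℝ, mpow ρ hρ β
      = U * diagonal (fun i => ((lam i ^ β : ℝ) : ℂ)) * star U := fun β => rfl
  have hspec : ρ = U * diagonal (fun i => ((lam i : ℝ) : ℂ)) * star U := by
    conv_lhs => rw [hρ.1.spectral_theorem]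
    rfl
  -- LHS
  have hL : (mpow ρ hρ α * H * mpow ρ hρ (1-α) * H).trace
      = ((∑ i, ∑ j, lam i ^ α * lam j ^ (1-α) * Complex.normSq (M i j) : ℝ) : ℂ) := by
    have e : mpow ρ hρ α * H * mpow ρ hρ (1-α) * H
        = U * diagonal (fun i => ((lam i ^ α : ℝ) : ℂ)) * star U * H *
          (U * diagonal (fun i => ((lam i ^ (1-α) : ℝ) : ℂ)) * star U) * H := by
      rw [hmpow, hmpow]
    rw [e, aux_trace U hU1 hU2 _ _ H, ← hM]
    push_cast
    refine Finset.sum_congr rfl fun i _ => Finset.sum_congr rfl fun j _ => ?_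
    rw [hMji i j, Complex.mul_conj]
  have hR : (ρ * H ^ 2).trace
      = ((∑ i, ∑ j, lam i * Complex.normSq (M i j) : ℝ) : ℂ) := by
    have e : ρ * H ^ 2 = U * diagonal (fun i => ((lam i : ℝ) : ℂ)) * star U * H *
        (U * diagonal (fun _ : n => (1:ℂ)) * star U) * H := by
      rw [← hspec, Matrix.diagonal_one, Matrix.mul_one, hU2, pow_two,
        Matrix.mul_one, Matrix.mul_assoc]
    rw [e, aux_trace U hU1 hU2 _ _ H, ← hM]
    push_cast
    refine Finset.sum_congr rfl fun i _ => Finset.sum_congr rfl fun j _ => ?_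
    rw [hMji i j, Complex.mul_conj]
    ring
  rw [hL, hR, Complex.real_le_real]
  -- real inequality
  set f : n → n → ℝ := fun i j => Complex.normSq (M i j) with hf
  have hfsym : ∀ i j, f i j = f j i := by
    intro i j; simp only [hf]; rw [hMji i j, Complex.normSq_conj]
  have hf0 : ∀ i j, 0 ≤ f i j := fun i j => Complex.normSq_nonneg _
  calc ∑ i, ∑ j, lam i ^ α * lam j ^ (1-α) * f i j
      ≤ ∑ i, ∑ j, (α * lam i + (1-α) * lam j) * f i j := by
        refine Finset.sum_le_sum fun i _ => Finset.sum_le_sum fun j _ => ?_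
        exact mul_le_mul_of_nonneg_right
          (Real.geom_mean_le_arith_mean2_weighted hα0 (by linarith) (hlam0 i) (hlam0 j)
            (by ring)) (hf0 i j)
    _ = α * (∑ i, ∑ j, lam i * f i j) + (1-α) * (∑ i, ∑ j, lam j * f i j) := by
        simp only [Finset.mul_sum]
        rw [← Finset.sum_add_distrib]
        refine Finset.sum_congr rfl fun i _ => ?_
        rw [← Finset.sum_add_distrib]
        exact Finset.sum_congr rfl fun j _ => by ring
    _ = ∑ i, ∑ j, lam i * f i j := by
        have h2 : (∑ i, ∑ j, lam j * f i j) = ∑ i, ∑ j, lam i * f i j := by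
          rw [Finset.sum_comm]
          exact Finset.sum_congr rfl fun i _ => Finset.sum_congr rfl fun j _ => by
            rw [hfsym i j]
        rw [h2]; ring
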